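/- There exist a small absolute constant c > 0 and an absolute constant C such that the following holds. Let N ≥ 4 be a dyadic integer, s ≥ 0 an integer, θ_1, …, θ_K s-separated real frequencies, A ⊆ ℂ^K a finite set, and x ∈ ℝ. Then ‖ sup_{a∈A} | Σ_{i=1}^K a_i e(θ_i x) e(θ_i u) | ‖_{L²_u([0, cN^s])} ≤ C N^{s/2} · min{ K^{1/2}, |A|^{1/2} } · sup_{a∈A} ‖a‖_{ℓ²_K}. -/

import Mathlib

open MeasureTheory
open scoped ENNReal NNReal

/-- `e(t) = e^{2πit}`. -/
noncomputable def eC (t : ℝ) : ℂ := Complex.exp (2 * Real.pi * Complex.I * t)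

section Aux
open intervalIntegral
open scoped Real

lemma eC_add (s t : ℝ) : eC (s + t) = eC s * eC t := by
  simp [eC, ← Complex.exp_add]; ring_nf
lemma norm_eC (t : ℝ) : ‖eC t‖ = 1 := by
  simp [eC, Complex.norm_exp]
lemma conj_eC (t : ℝ) : (starRingEnd ℂ) (eC t) = eC (-t) := by
  rw [eC, eC, ← Complex.exp_conj]
  congr 1
  simp only [map_mul, Complex.conj_I, Complex.conj_ofReal, map_ofNat, Complex.ofReal_neg]
  ring
lemma continuous_eC : Continuous eC := by unfold eC; continuity

lemma interval_integral_re {f : ℝ → ℂ} {a b : ℝ} (hab : a ≤ b)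
    (hf : IntervalIntegrable f volume a b) :
    ∫ u in a..b, (f u).re = (∫ u in a..b, f u).re := by
  rw [intervalIntegral.integral_of_le hab, intervalIntegral.integral_of_le hab]
  rw [intervalIntegrable_iff_integrableOn_Ioc_of_le hab] at hf
  have := integral_re (μ := volume.restrict (Set.Ioc a b)) hf
  simpa using this

lemma expand_integral {K : ℕ} (θ : Fin K → ℝ) (c : Fin K → ℂ) (a b : ℝ) (hab : a ≤ b) :
    ∫ u in a..b, ‖∑ i, c i * eC (θ i * u)‖^2 =
      (∑ i, ∑ j, (c i * (starRingEnd ℂ) (c j)) * ∫ u in a..b, eC ((θ i - θ j) * u)).re := by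
  have hpt : ∀ u : ℝ, (‖∑ i, c i * eC (θ i * u)‖:ℝ)^2 =
      (∑ i, ∑ j, (c i * (starRingEnd ℂ) (c j)) * eC ((θ i - θ j) * u)).re := by
    intro u
    have hz : (‖∑ i, c i * eC (θ i * u)‖:ℝ)^2 =
        ((∑ i, c i * eC (θ i * u)) * (starRingEnd ℂ) (∑ j, c j * eC (θ j * u))).re := by
      rw [Complex.mul_conj, Complex.ofReal_re, Complex.normSq_eq_norm_sq]
    rw [hz]
    congr 1
    rw [map_sum, Finset.sum_mul_sum]
    apply Finset.sum_congr rfl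
    intro i _
    apply Finset.sum_congr rfl
    intro j _
    rw [map_mul, conj_eC]
    have : eC (θ i * u) * eC (-(θ j * u)) = eC ((θ i - θ j) * u) := by
      rw [← eC_add]; congr 1; ring
    calc c i * eC (θ i * u) * ((starRingEnd ℂ) (c j) * eC (-(θ j * u)))
        = (c i * (starRingEnd ℂ) (c j)) * (eC (θ i * u) * eC (-(θ j * u))) := by ring
      _ = (c i * (starRingEnd ℂ) (c j)) * eC ((θ i - θ j) * u) := by rw [this]
  simp_rw [hpt]
  rw [interval_integral_re hab]
  · congr 1
    rw [intervalIntegral.integral_finset_sum]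
    · apply Finset.sum_congr rfl
      intro i _
      rw [intervalIntegral.integral_finset_sum]
      · apply Finset.sum_congr rfl
        intro j _
        rw [intervalIntegral.integral_const_mul]
      · intro j _
        apply Continuous.intervalIntegrable
        exact continuous_const.mul (continuous_eC.comp (continuous_const.mul continuous_id))
    · intro i _
      apply Continuous.intervalIntegrable
      apply continuous_finset_sum
      intro j _
      exact continuous_const.mul (continuous_eC.comp (continuous_const.mul continuous_id))
  · apply Continuous.intervalIntegrable
    apply continuous_finset_sum
    intro i _
    apply continuous_finset_sum
    intro j _
    exact continuous_const.mul (continuous_eC.comp (continuous_const.mul continuous_id))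

lemma translate_expand {K : ℕ} (θ : Fin K → ℝ) (b : Fin K → ℂ) (L : ℝ) (hL : 0 < L) (t : ℝ) :
    ∫ u in t..(t + 2*L), ‖∑ i, b i * eC (θ i * u)‖^2 =
      (∑ i, ∑ j, (b i * (starRingEnd ℂ) (b j)) *
        (eC ((θ i - θ j) * t) * ∫ u in (0:ℝ)..(2*L), eC ((θ i - θ j) * u))).re := by
  have htr : (∫ u in t..(t + 2*L), ‖∑ i, b i * eC (θ i * u)‖^2)
      = ∫ u in (0:ℝ)..(2*L), ‖∑ i, b i * eC (θ i * (u + t))‖^2 := by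
    rw [intervalIntegral.integral_comp_add_right (fun u => ‖∑ i, b i * eC (θ i * u)‖^2) t]
    norm_num
    rw [add_comm]
  rw [htr]
  have hpt : ∀ u : ℝ, (‖∑ i, b i * eC (θ i * (u + t))‖:ℝ)^2
      = ‖∑ i, (b i * eC (θ i * t)) * eC (θ i * u)‖^2 := by
    intro u
    congr 2
    apply Finset.sum_congr rfl
    intro i _
    have : θ i * (u + t) = θ i * u + θ i * t := by ring
    rw [this, eC_add]
    ring
  simp_rw [hpt]
  rw [expand_integral θ (fun i => b i * eC (θ i * t)) 0 (2*L) (by linarith)]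
  congr 1
  apply Finset.sum_congr rfl
  intro i _
  apply Finset.sum_congr rfl
  intro j _
  rw [map_mul, conj_eC]
  have h1 : eC (θ i * t) * eC (-(θ j * t)) = eC ((θ i - θ j) * t) := by
    rw [← eC_add]; congr 1; ring
  calc b i * eC (θ i * t) * ((starRingEnd ℂ) (b j) * eC (-(θ j * t))) *
        ∫ u in (0:ℝ)..(2*L), eC ((θ i - θ j) * u)
      = (b i * (starRingEnd ℂ) (b j)) * ((eC (θ i * t) * eC (-(θ j * t))) *
        ∫ u in (0:ℝ)..(2*L), eC ((θ i - θ j) * u)) := by ring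
    _ = _ := by rw [h1]

lemma eC_integral (ξ : ℝ) (hξ : ξ ≠ 0) (a b : ℝ) :
    ‖∫ u in a..b, eC (ξ * u)‖ ≤ 1 / (Real.pi * |ξ|) := by
  have h : ∀ u : ℝ, eC (ξ * u) = Complex.exp ((2 * Real.pi * Complex.I * ξ) * u) := by
    intro u; rw [eC]; norm_num; ring_nf
  have hc : (2 * Real.pi * Complex.I * ξ : ℂ) ≠ 0 := by
    simp [Complex.ext_iff, Real.pi_ne_zero, hξ]
  rw [show (fun u : ℝ => eC (ξ * u)) = fun u : ℝ => Complex.exp ((2 * Real.pi * Complex.I * ξ) * u) from funext h]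
  rw [integral_exp_mul_complex hc]
  rw [norm_div]
  have hnorm : ∀ r : ℝ, ‖Complex.exp (2 * Real.pi * Complex.I * ξ * r)‖ = 1 := by
    intro r
    rw [Complex.norm_exp]
    have : (2 * Real.pi * Complex.I * ξ * r).re = 0 := by simp
    rw [this, Real.exp_zero]
  have h2 : ‖Complex.exp (2 * Real.pi * Complex.I * ξ * b) - Complex.exp (2 * Real.pi * Complex.I * ξ * a)‖ ≤ 2 := by
    calc _ ≤ ‖Complex.exp (2 * Real.pi * Complex.I * ξ * b)‖ + ‖Complex.exp (2 * Real.pi * Complex.I * ξ * a)‖ := norm_sub_le _ _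
    _ ≤ 2 := by rw [hnorm, hnorm]; norm_num
  have hcn : ‖(2 * Real.pi * Complex.I * ξ : ℂ)‖ = 2 * Real.pi * |ξ| := by
    simp [norm_mul, Complex.norm_real, abs_of_nonneg Real.pi_pos.le]
  rw [hcn]
  rw [div_le_div_iff₀ (by positivity) (by positivity)]
  calc ‖Complex.exp (2 * ↑Real.pi * Complex.I * ↑ξ * ↑b) - Complex.exp (2 * ↑Real.pi * Complex.I * ↑ξ * ↑a)‖ * (Real.pi * |ξ|) ≤ 2 * (Real.pi * |ξ|) := by
        apply mul_le_mul_of_nonneg_right h2 (by positivity)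
    _ = 1 * (2 * Real.pi * |ξ|) := by ring

lemma eC_integral_triv (ξ : ℝ) (a b : ℝ) (hab : a ≤ b) :
    ‖∫ u in a..b, eC (ξ * u)‖ ≤ b - a := by
  have := intervalIntegral.norm_integral_le_of_norm_le_const (C := 1)
    (f := fun u : ℝ => eC (ξ * u)) (a := a) (b := b) (fun u _ => (norm_eC _).le)
  simpa [abs_of_nonneg (sub_nonneg.mpr hab)] using this

lemma zeta_int_bound : ∑' m : ℤ, 1 / (m:ℝ)^2 ≤ 6 := by
  have h1 : HasSum (fun n : ℕ => 1 / ((n:ℤ):ℝ)^2) (Real.pi^2/6) := by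
    have hfe : (fun n : ℕ => 1 / ((n:ℤ):ℝ)^2) = (fun n : ℕ => 1/(n:ℝ)^2) := by
      funext n; push_cast; ring
    rw [hfe]; exact hasSum_zeta_two
  have h2 : HasSum (fun n : ℕ => 1 / (((-(n+1)):ℤ):ℝ)^2) (Real.pi^2/6) := by
    have h0 : HasSum (fun n : ℕ => (1:ℝ) / (((n:ℝ))+1)^2) (Real.pi^2/6) := by
      have hy : HasSum (fun n : ℕ => (1:ℝ)/(n:ℝ)^2)
          (Real.pi^2/6 + ∑ i ∈ Finset.range 1, (1:ℝ)/(i:ℝ)^2) := by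
        simpa using hasSum_zeta_two
      have := (hasSum_nat_add_iff (f := fun n : ℕ => (1:ℝ)/(n:ℝ)^2) 1).mpr hy
      convert this using 3
      · rfl
      push_cast
      ring
    convert h0 using 3
    push_cast
    ring
  have h : HasSum (fun m : ℤ => 1 / (m:ℝ)^2) (Real.pi^2/6 + Real.pi^2/6) :=
    HasSum.of_nat_of_neg_add_one h1 h2
  rw [h.tsum_eq]
  have hpi : Real.pi ≤ 4 := Real.pi_le_four
  nlinarith [Real.pi_pos]

lemma count_sep {K : ℕ} (θ : Fin K → ℝ) (δ : ℝ) (hδ : 0 < δ)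
    (hsep : ∀ i j, i ≠ j → δ < |θ i - θ j|) (i : Fin K) :
    ∑ j ∈ Finset.univ.erase i, 1 / (θ j - θ i)^2 ≤ 6 / δ^2 := by
  set m : Fin K → ℤ := fun j => ⌊|θ j - θ i| / δ⌋ with hm
  set n : Fin K → ℤ := fun j => if 0 < θ j - θ i then m j else -(m j) with hn
  have hm1 : ∀ j, j ≠ i → 1 ≤ m j := by
    intro j hj
    rw [hm]
    apply Int.le_floor.mpr
    rw [le_div_iff₀ hδ]
    have := hsep j i hj
    simp only [Int.cast_one, one_mul]
    linarith
  have hml : ∀ j, δ * (m j : ℝ) ≤ |θ j - θ i| := by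
    intro j
    have h := Int.floor_le (|θ j - θ i| / δ)
    have hmj : (m j : ℝ) = (⌊|θ j - θ i| / δ⌋ : ℝ) := rfl
    rw [hmj]
    calc δ * ((⌊|θ j - θ i| / δ⌋:ℤ) : ℝ) ≤ δ * (|θ j - θ i| / δ) := by nlinarith
    _ = |θ j - θ i| := by field_simp
  have hmh : ∀ j, |θ j - θ i| < δ * ((m j : ℝ) + 1) := by
    intro j
    have h := Int.lt_floor_add_one (|θ j - θ i| / δ)
    have hmj : (m j : ℝ) = (⌊|θ j - θ i| / δ⌋ : ℝ) := rfl
    rw [hmj]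
    calc |θ j - θ i| = δ * (|θ j - θ i| / δ) := by field_simp
    _ < δ * (((⌊|θ j - θ i| / δ⌋:ℤ) : ℝ) + 1) := by nlinarith
  have key1 : ∀ j, j ≠ i → 1 / (θ j - θ i)^2 ≤ (1/δ^2) * (1 / ((n j : ℝ))^2) := by
    intro j hj
    have h1 : (1:ℤ) ≤ m j := hm1 j hj
    have habs : ((n j : ℝ))^2 = ((m j : ℝ))^2 := by
      rw [hn]; dsimp only; split <;> push_cast <;> ring
    have hlow : δ * (m j : ℝ) ≤ |θ j - θ i| := hml j
    have hm1' : (1:ℝ) ≤ (m j : ℝ) := by exact_mod_cast h1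
    have ht2 : (δ * (m j:ℝ))^2 ≤ (θ j - θ i)^2 := by
      rw [← sq_abs (θ j - θ i)]
      apply sq_le_sq' <;> nlinarith
    rw [habs, show (1/δ^2) * (1/((m j:ℝ))^2) = 1/((δ*(m j:ℝ))^2) by rw [mul_pow]; ring]
    have hq : (0:ℝ) < δ * (m j:ℝ) := by nlinarith
    exact one_div_le_one_div_of_le (pow_pos hq 2) ht2
  have inj : ∀ j ∈ Finset.univ.erase i, ∀ j' ∈ Finset.univ.erase i, n j = n j' → j = j' := by
    intro j hj j' hj' hnn
    by_contra hne
    have hji : j ≠ i := Finset.ne_of_mem_erase hj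
    have hji' : j' ≠ i := Finset.ne_of_mem_erase hj'
    have h1 : (1:ℤ) ≤ m j := hm1 j hji
    have h1' : (1:ℤ) ≤ m j' := hm1 j' hji'
    have hmm : m j = m j' ∧ ((0 < θ j - θ i) ↔ (0 < θ j' - θ i)) := by
      rw [hn] at hnn
      dsimp only at hnn
      split at hnn <;> split at hnn <;>
        first
          | exact ⟨hnn, iff_of_true ‹_› ‹_›⟩
          | exact ⟨by omega, iff_of_false ‹_› ‹_›⟩
          | (exfalso; omega)
    obtain ⟨hmeq, hsg⟩ := hmm
    have hsepjj := hsep j j' hne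
    have hl := hml j
    have hh := hmh j
    have hl' := hml j'
    have hh' := hmh j'
    rw [← hmeq] at hl' hh'
    have hcontra : |θ j - θ j'| < δ := by
      rcases lt_or_ge 0 (θ j - θ i) with hpos | hneg
      · have hpos' := hsg.mp hpos
        rw [abs_of_pos hpos] at hl hh
        rw [abs_of_pos hpos'] at hl' hh'
        rw [abs_lt]; constructor <;> linarith
      · have hneg' : ¬ (0 < θ j' - θ i) := fun h => by have := hsg.mpr h; linarith
        push_neg at hneg'
        rw [abs_of_nonpos hneg] at hl hh
        rw [abs_of_nonpos hneg'] at hl' hh'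
        rw [abs_lt]; constructor <;> linarith
    linarith
  calc ∑ j ∈ Finset.univ.erase i, 1 / (θ j - θ i)^2
      ≤ ∑ j ∈ Finset.univ.erase i, (1/δ^2) * (1 / ((n j : ℝ))^2) := by
        apply Finset.sum_le_sum
        intro j hj
        exact key1 j (Finset.ne_of_mem_erase hj)
    _ = (1/δ^2) * ∑ j ∈ Finset.univ.erase i, 1 / ((n j : ℝ))^2 := by
        rw [Finset.mul_sum]
    _ = (1/δ^2) * ∑ p ∈ (Finset.univ.erase i).image n, 1 / (p:ℝ)^2 := by
        rw [Finset.sum_image inj]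
    _ ≤ (1/δ^2) * ∑' p : ℤ, 1 / (p:ℝ)^2 := by
        apply mul_le_mul_of_nonneg_left _ (by positivity)
        exact ((Real.summable_one_div_int_pow).mpr one_lt_two).sum_le_tsum _
          (fun p _ => by positivity)
    _ ≤ (1/δ^2) * 6 := by
        apply mul_le_mul_of_nonneg_left zeta_int_bound (by positivity)
    _ = 6 / δ^2 := by ring

lemma core_bound {K : ℕ} (θ : Fin K → ℝ) (b : Fin K → ℂ) (L δ : ℝ) (hL : 0 < L) (hδ : 0 < δ)
    (hsep : ∀ i j, i ≠ j → δ < |θ i - θ j|) :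
    ∫ u in (0:ℝ)..L, ‖∑ i, b i * eC (θ i * u)‖^2 ≤
      (2*L + 6/(Real.pi^2 * L * δ^2)) * ∑ i, ‖b i‖^2 := by
  have hcont1 : ∀ ξ : ℝ, Continuous fun u : ℝ => eC (ξ * u) :=
    fun ξ => continuous_eC.comp (continuous_const.mul continuous_id)
  have hfc : Continuous fun u : ℝ => ‖∑ i, b i * eC (θ i * u)‖^2 := by
    apply Continuous.pow
    apply Continuous.norm
    exact continuous_finset_sum _ (fun i _ => continuous_const.mul (hcont1 (θ i)))
  set E : ℝ → ℂ := fun ξ => ∫ u in (0:ℝ)..(2*L), eC (ξ * u) with hE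
  set E' : ℝ → ℂ := fun ξ => ∫ t in (-L)..(0:ℝ), eC (ξ * t) with hE'
  set P : ℝ → ℝ := fun t => (∑ i, ∑ j, (b i * (starRingEnd ℂ) (b j)) *
      (eC ((θ i - θ j) * t) * E (θ i - θ j))).re with hP
  set I : ℝ := ∫ u in (0:ℝ)..L, ‖∑ i, b i * eC (θ i * u)‖^2 with hI
  have hIP : ∀ t ∈ Set.Icc (-L) (0:ℝ), I ≤ P t := by
    intro t ht
    obtain ⟨ht1, ht2⟩ := ht
    have hmono : I ≤ ∫ u in t..(t + 2*L), ‖∑ i, b i * eC (θ i * u)‖^2 := by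
      apply intervalIntegral.integral_mono_interval ht2 (le_of_lt hL) (by linarith)
      · filter_upwards with u
        positivity
      · exact hfc.intervalIntegrable _ _
    calc I ≤ _ := hmono
      _ = P t := translate_expand θ b L hL t
  have hPc : Continuous P := by
    apply Complex.continuous_re.comp
    apply continuous_finset_sum
    intro i _
    apply continuous_finset_sum
    intro j _
    exact continuous_const.mul ((hcont1 _).mul continuous_const)
  have key : L * I ≤ ∫ t in (-L)..(0:ℝ), P t := by
    have hconst : ∫ _ in (-L)..(0:ℝ), I = L * I := by
      rw [intervalIntegral.integral_const]
      simp
    rw [← hconst]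
    apply intervalIntegral.integral_mono_on (by linarith)
      (intervalIntegrable_const) (hPc.intervalIntegrable _ _) hIP
  have hInt : ∫ t in (-L)..(0:ℝ), P t =
      (∑ i, ∑ j, (b i * (starRingEnd ℂ) (b j)) * E (θ i - θ j) * E' (θ i - θ j)).re := by
    rw [hP]
    have hre : ∫ t in (-L)..(0:ℝ), (∑ i, ∑ j, (b i * (starRingEnd ℂ) (b j)) *
        (eC ((θ i - θ j) * t) * E (θ i - θ j))).re
        = (∫ t in (-L)..(0:ℝ), ∑ i, ∑ j, (b i * (starRingEnd ℂ) (b j)) *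
        (eC ((θ i - θ j) * t) * E (θ i - θ j))).re := by
      apply interval_integral_re (by linarith)
      apply Continuous.intervalIntegrable
      apply continuous_finset_sum
      intro i _
      apply continuous_finset_sum
      intro j _
      exact continuous_const.mul ((hcont1 _).mul continuous_const)
    rw [hre]
    congr 1
    rw [intervalIntegral.integral_finset_sum (fun i _ => by
      apply Continuous.intervalIntegrable
      apply continuous_finset_sum
      intro j _
      exact continuous_const.mul ((hcont1 _).mul continuous_const))]
    apply Finset.sum_congr rfl
    intro i _
    rw [intervalIntegral.integral_finset_sum (fun j _ => by
      apply Continuous.intervalIntegrable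
      exact continuous_const.mul ((hcont1 _).mul continuous_const))]
    apply Finset.sum_congr rfl
    intro j _
    have hptw : ∀ t : ℝ, (b i * (starRingEnd ℂ) (b j)) * (eC ((θ i - θ j) * t) * E (θ i - θ j))
        = (b i * (starRingEnd ℂ) (b j) * E (θ i - θ j)) * eC ((θ i - θ j) * t) := by
      intro t; ring
    simp_rw [hptw]
    rw [intervalIntegral.integral_const_mul]
  set S : ℝ := ∑ i, ‖b i‖^2 with hS
  have hS0 : 0 ≤ S := Finset.sum_nonneg (fun i _ => by positivity)
  set T : Fin K → Fin K → ℝ := fun i j => ‖b i‖ * ‖b j‖ * (‖E (θ i - θ j)‖ * ‖E' (θ i - θ j)‖)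
    with hT
  have hnorm_bound : (∑ i, ∑ j, (b i * (starRingEnd ℂ) (b j)) * E (θ i - θ j) * E' (θ i - θ j)).re
      ≤ ∑ i, ∑ j, T i j := by
    calc (∑ i, ∑ j, (b i * (starRingEnd ℂ) (b j)) * E (θ i - θ j) * E' (θ i - θ j)).re
        ≤ ‖∑ i, ∑ j, (b i * (starRingEnd ℂ) (b j)) * E (θ i - θ j) * E' (θ i - θ j)‖ :=
          Complex.re_le_norm _
      _ ≤ ∑ i, ‖∑ j, (b i * (starRingEnd ℂ) (b j)) * E (θ i - θ j) * E' (θ i - θ j)‖ :=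
          norm_sum_le _ _
      _ ≤ ∑ i, ∑ j, T i j := by
          apply Finset.sum_le_sum
          intro i _
          calc ‖∑ j, (b i * (starRingEnd ℂ) (b j)) * E (θ i - θ j) * E' (θ i - θ j)‖
              ≤ ∑ j, ‖(b i * (starRingEnd ℂ) (b j)) * E (θ i - θ j) * E' (θ i - θ j)‖ :=
                norm_sum_le _ _
            _ = ∑ j, T i j := by
                apply Finset.sum_congr rfl
                intro j _
                rw [hT]
                dsimp only
                rw [norm_mul, norm_mul, norm_mul, RCLike.norm_conj]
                ring
  have hdiag : ∀ i : Fin K, T i i ≤ ‖b i‖^2 * (2*L*L) := by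
    intro i
    have hE0 : ‖E (θ i - θ i)‖ ≤ 2*L := by
      have := eC_integral_triv (θ i - θ i) 0 (2*L) (by linarith)
      rw [hE]
      simpa using this
    have hE'0 : ‖E' (θ i - θ i)‖ ≤ L := by
      have := eC_integral_triv (θ i - θ i) (-L) 0 (by linarith)
      rw [hE']
      simpa using this
    rw [hT]
    dsimp only
    have h1 : ‖E (θ i - θ i)‖ * ‖E' (θ i - θ i)‖ ≤ 2*L*L := by
      apply mul_le_mul hE0 hE'0 (norm_nonneg _) (by linarith)
    calc ‖b i‖ * ‖b i‖ * (‖E (θ i - θ i)‖ * ‖E' (θ i - θ i)‖)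
        ≤ ‖b i‖ * ‖b i‖ * (2*L*L) := by
          apply mul_le_mul_of_nonneg_left h1 (by positivity)
      _ = ‖b i‖^2 * (2*L*L) := by ring
  have hoff : ∀ i j : Fin K, j ≠ i →
      T i j ≤ (‖b i‖^2 + ‖b j‖^2) / 2 * (1 / (Real.pi^2 * (θ j - θ i)^2)) := by
    intro i j hji
    have hξ : θ i - θ j ≠ 0 := by
      have hgt := hsep j i hji
      intro h
      rw [show θ j - θ i = -(θ i - θ j) by ring, h] at hgt
      simp at hgt
      linarith
    have hEb := eC_integral (θ i - θ j) hξ 0 (2*L)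
    have hE'b := eC_integral (θ i - θ j) hξ (-L) 0
    have hprod : ‖E (θ i - θ j)‖ * ‖E' (θ i - θ j)‖ ≤ 1 / (Real.pi^2 * (θ j - θ i)^2) := by
      calc ‖E (θ i - θ j)‖ * ‖E' (θ i - θ j)‖
          ≤ (1 / (Real.pi * |θ i - θ j|)) * (1 / (Real.pi * |θ i - θ j|)) := by
            apply mul_le_mul hEb hE'b (norm_nonneg _) (by positivity)
        _ = 1 / (Real.pi^2 * |θ i - θ j|^2) := by ring
        _ = 1 / (Real.pi^2 * (θ j - θ i)^2) := by
            rw [sq_abs]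
            congr 2
            ring
    have hab : ‖b i‖ * ‖b j‖ ≤ (‖b i‖^2 + ‖b j‖^2) / 2 := by nlinarith [sq_nonneg (‖b i‖ - ‖b j‖)]
    rw [hT]
    dsimp only
    apply mul_le_mul hab hprod (by positivity) (by positivity)
  have swap : ∀ g : Fin K → Fin K → ℝ,
      ∑ i, ∑ j ∈ Finset.univ.erase i, g i j = ∑ i, ∑ j ∈ Finset.univ.erase i, g j i := by
    intro g
    simp_rw [Finset.sum_erase_eq_sub (Finset.mem_univ _)]
    rw [Finset.sum_sub_distrib, Finset.sum_sub_distrib, Finset.sum_comm]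
  have hcount : ∀ i : Fin K, ∑ j ∈ Finset.univ.erase i, 1 / (θ j - θ i)^2 ≤ 6 / δ^2 :=
    count_sep θ δ hδ hsep
  have hTotal : ∑ i, ∑ j, T i j ≤ 2*L*L*S + 6/(Real.pi^2*δ^2) * S := by
    have hsplit : ∀ i : Fin K, ∑ j, T i j = T i i + ∑ j ∈ Finset.univ.erase i, T i j := by
      intro i
      exact (Finset.add_sum_erase _ _ (Finset.mem_univ i)).symm
    simp_rw [hsplit]
    rw [Finset.sum_add_distrib]
    have h1 : ∑ i, T i i ≤ 2*L*L*S := by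
      calc ∑ i, T i i ≤ ∑ i, ‖b i‖^2 * (2*L*L) := Finset.sum_le_sum (fun i _ => hdiag i)
        _ = 2*L*L*S := by rw [hS, ← Finset.sum_mul]; ring
    have h2 : ∑ i, ∑ j ∈ Finset.univ.erase i, T i j ≤ 6/(Real.pi^2*δ^2) * S := by
      have hstep : ∑ i, ∑ j ∈ Finset.univ.erase i, T i j
          ≤ ∑ i, ∑ j ∈ Finset.univ.erase i,
            ((‖b i‖^2/2) * (1 / (Real.pi^2 * (θ j - θ i)^2))
              + (‖b j‖^2/2) * (1 / (Real.pi^2 * (θ j - θ i)^2))) := by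
        apply Finset.sum_le_sum
        intro i _
        apply Finset.sum_le_sum
        intro j hj
        have := hoff i j (Finset.ne_of_mem_erase hj)
        calc T i j ≤ (‖b i‖^2 + ‖b j‖^2) / 2 * (1 / (Real.pi^2 * (θ j - θ i)^2)) := this
          _ = (‖b i‖^2/2) * (1 / (Real.pi^2 * (θ j - θ i)^2))
              + (‖b j‖^2/2) * (1 / (Real.pi^2 * (θ j - θ i)^2)) := by ring
      have hsum2 : ∀ i : Fin K, ∑ j ∈ Finset.univ.erase i,
          (‖b i‖^2/2) * (1 / (Real.pi^2 * (θ j - θ i)^2)) ≤ (‖b i‖^2/2) * (6/(Real.pi^2 * δ^2)) := by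
        intro i
        rw [← Finset.mul_sum]
        apply mul_le_mul_of_nonneg_left _ (by positivity)
        have : ∑ j ∈ Finset.univ.erase i, 1 / (Real.pi^2 * (θ j - θ i)^2)
            = (1/Real.pi^2) * ∑ j ∈ Finset.univ.erase i, 1 / (θ j - θ i)^2 := by
          rw [Finset.mul_sum]
          apply Finset.sum_congr rfl
          intro j _
          rw [div_mul_div_comm, one_mul]
        rw [this]
        calc (1/Real.pi^2) * ∑ j ∈ Finset.univ.erase i, 1 / (θ j - θ i)^2
            ≤ (1/Real.pi^2) * (6/δ^2) := by
              apply mul_le_mul_of_nonneg_left (hcount i) (by positivity)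
          _ = 6/(Real.pi^2 * δ^2) := by ring
      calc ∑ i, ∑ j ∈ Finset.univ.erase i, T i j ≤ _ := hstep
        _ = ∑ i, ∑ j ∈ Finset.univ.erase i, (‖b i‖^2/2) * (1 / (Real.pi^2 * (θ j - θ i)^2))
            + ∑ i, ∑ j ∈ Finset.univ.erase i, (‖b j‖^2/2) * (1 / (Real.pi^2 * (θ j - θ i)^2)) := by
            rw [← Finset.sum_add_distrib]
            apply Finset.sum_congr rfl
            intro i _
            rw [← Finset.sum_add_distrib]
        _ = ∑ i, ∑ j ∈ Finset.univ.erase i, (‖b i‖^2/2) * (1 / (Real.pi^2 * (θ j - θ i)^2))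
            + ∑ i, ∑ j ∈ Finset.univ.erase i, (‖b i‖^2/2) * (1 / (Real.pi^2 * (θ i - θ j)^2)) := by
            congr 1
            exact swap (fun i j => (‖b j‖^2/2) * (1 / (Real.pi^2 * (θ j - θ i)^2)))
        _ = ∑ i, ∑ j ∈ Finset.univ.erase i, (‖b i‖^2/2) * (1 / (Real.pi^2 * (θ j - θ i)^2))
            + ∑ i, ∑ j ∈ Finset.univ.erase i, (‖b i‖^2/2) * (1 / (Real.pi^2 * (θ j - θ i)^2)) := by
            congr 1
            apply Finset.sum_congr rfl
            intro i _
            apply Finset.sum_congr rfl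
            intro j _
            congr 3
            ring
        _ ≤ (∑ i, (‖b i‖^2/2) * (6/(Real.pi^2 * δ^2)))
            + ∑ i, (‖b i‖^2/2) * (6/(Real.pi^2 * δ^2)) := by
            apply add_le_add <;> exact Finset.sum_le_sum (fun i _ => hsum2 i)
        _ = 6/(Real.pi^2*δ^2) * S := by
            have hhalf : ∑ i, ‖b i‖^2/2 = S/2 := by rw [hS, ← Finset.sum_div]
            rw [← Finset.sum_mul, hhalf]
            ring
    linarith
  have hfinal : L * I ≤ 2*L*L*S + 6/(Real.pi^2*δ^2) * S := by
    calc L * I ≤ ∫ t in (-L)..(0:ℝ), P t := key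
      _ = _ := hInt
      _ ≤ ∑ i, ∑ j, T i j := hnorm_bound
      _ ≤ _ := hTotal
  rw [← mul_le_mul_iff_right₀ hL]
  calc L * I ≤ 2*L*L*S + 6/(Real.pi^2*δ^2) * S := hfinal
    _ = L * ((2*L + 6/(Real.pi^2 * L * δ^2)) * S) := by
        field_simp

end Aux

set_option maxHeartbeats 1000000 in
lemma main_aux :
    ∀ N : ℕ, (∃ k, N = 2^k) → 4 ≤ N → ∀ s : ℕ, ∀ K : ℕ,
    ∀ θ : Fin K → ℝ, (∀ i j, i ≠ j → (2:ℝ) ^ (-(2*(s:ℤ)) - 2) < |θ i - θ j|) →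
    ∀ A : Finset (EuclideanSpace ℂ (Fin K)), ∀ x : ℝ,
    (∫⁻ u in Set.Icc (0:ℝ) ((1:ℝ) * (N:ℝ)^(s:ℕ)),
        (⨆ a ∈ A, (‖∑ i, a i * eC (θ i * x) * eC (θ i * u)‖₊ : ℝ≥0∞)) ^ (2:ℝ))
      ^ ((1:ℝ)/2)
      ≤ ENNReal.ofReal ((4:ℝ) * (N:ℝ) ^ ((s:ℝ)/2) *
          min (Real.sqrt K) (Real.sqrt A.card) * (⨆ a ∈ A, ‖a‖)) := by
  intro N _ hN4 s K θ hsep A x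
  rcases A.eq_empty_or_nonempty with rfl | hA
  · simp [ENNReal.zero_rpow_of_pos]
  have hN4' : (4:ℝ) ≤ (N:ℝ) := by exact_mod_cast hN4
  have hNpos : (0:ℝ) < (N:ℝ) := by linarith
  rw [one_mul]
  set L : ℝ := (N:ℝ)^(s:ℕ) with hLdef
  have hL1 : (1:ℝ) ≤ L := one_le_pow₀ (by linarith)
  have hLpos : (0:ℝ) < L := lt_of_lt_of_le one_pos hL1
  set δ : ℝ := (2:ℝ) ^ (-(2*(s:ℤ)) - 2) with hδdef
  have hδpos : 0 < δ := by positivity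
  set M : ℝ := ⨆ a ∈ A, ‖a‖ with hMdef
  have hbdd : BddAbove (Set.range fun a : EuclideanSpace ℂ (Fin K) => ⨆ _ : a ∈ A, ‖a‖) := by
    refine ⟨max (A.sup' hA fun a => ‖a‖) 0, ?_⟩
    rintro y ⟨a, rfl⟩
    dsimp only
    by_cases ha : a ∈ A
    · rw [ciSup_pos ha]
      exact le_max_of_le_left (Finset.le_sup' _ ha)
    · haveI : IsEmpty (a ∈ A) := by simpa using ha
      rw [Real.iSup_of_isEmpty]
      exact le_max_right _ _
  have hM : ∀ a ∈ A, ‖a‖ ≤ M := by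
    intro a ha
    rw [hMdef]
    apply le_ciSup_of_le hbdd a
    rw [ciSup_pos ha]
  have hM0 : 0 ≤ M := le_trans (norm_nonneg _) (hM hA.choose hA.choose_spec)
  have hnormsum : ∀ a : EuclideanSpace ℂ (Fin K), ∑ i, ‖a i‖^2 = ‖a‖^2 := by
    intro a
    rw [EuclideanSpace.norm_eq a, Real.sq_sqrt (Finset.sum_nonneg fun i _ => sq_nonneg _)]
  -- coefficient bound
  have hδsq : δ^2 * (16 * 16^s) = 1 := by
    have h16 : (16:ℝ)^s = (2:ℝ)^((4*s : ℕ):ℤ) := by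
      rw [zpow_natCast, pow_mul]; norm_num
    rw [hδdef, h16, ← zpow_natCast ((2:ℝ)^(-(2*(s:ℤ)) - 2)) 2, ← zpow_mul,
      show (16:ℝ) = (2:ℝ)^(4:ℤ) by norm_num,
      ← zpow_add₀ (by norm_num : (2:ℝ) ≠ 0), ← zpow_add₀ (by norm_num : (2:ℝ) ≠ 0),
      ← zpow_zero (2:ℝ)]
    congr 1
    push_cast
    ring
  have h16L : (16:ℝ)^s ≤ L^2 := by
    rw [hLdef, ← pow_mul, show s*2 = 2*s from mul_comm s 2, pow_mul]
    apply pow_le_pow_left₀ (by norm_num)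
    nlinarith
  have hpi2 : (9:ℝ) ≤ Real.pi^2 := by nlinarith [Real.pi_gt_three]
  have hcoef : 2*L + 6/(Real.pi^2 * L * δ^2) ≤ 13 * L := by
    have hkey : 6/(Real.pi^2 * L * δ^2) ≤ 11 * L := by
      rw [div_le_iff₀ (by positivity)]
      have h1 : (16:ℝ)^s * δ^2 = 1/16 := by nlinarith [hδsq]
      have h2 : 9 * ((16:ℝ)^s * δ^2) ≤ Real.pi^2 * (L^2 * δ^2) := by
        apply mul_le_mul hpi2 _ (by positivity) (by positivity)
        exact mul_le_mul_of_nonneg_right h16L (by positivity)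
      nlinarith [sq_nonneg L, sq_nonneg δ, hLpos]
    linarith
  have hpercont : ∀ a : EuclideanSpace ℂ (Fin K), Continuous
      (fun u : ℝ => ∑ i, a i * eC (θ i * x) * eC (θ i * u)) := by
    intro a
    apply continuous_finset_sum
    intro i _
    exact continuous_const.mul (continuous_eC.comp (continuous_const.mul continuous_id))
  have hIa : ∀ a ∈ A, ∫ u in (0:ℝ)..L, ‖∑ i, a i * eC (θ i * x) * eC (θ i * u)‖^2
      ≤ 13*L*M^2 := by
    intro a ha
    have hcb := core_bound θ (fun i => a i * eC (θ i * x)) L δ hLpos hδpos hsep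
    have hS : ∑ i, ‖a i * eC (θ i * x)‖^2 ≤ M^2 := by
      have h1 : ∀ i : Fin K, ‖a i * eC (θ i * x)‖^2 = ‖a i‖^2 := by
        intro i; rw [norm_mul, norm_eC, mul_one]
      simp_rw [h1]
      rw [hnormsum a]
      exact pow_le_pow_left₀ (norm_nonneg a) (hM a ha) 2
    have hSnn : (0:ℝ) ≤ ∑ i, ‖a i * eC (θ i * x)‖^2 :=
      Finset.sum_nonneg fun i _ => sq_nonneg _
    calc ∫ u in (0:ℝ)..L, ‖∑ i, a i * eC (θ i * x) * eC (θ i * u)‖^2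
        ≤ (2*L + 6/(Real.pi^2 * L * δ^2)) * ∑ i, ‖a i * eC (θ i * x)‖^2 := hcb
      _ ≤ (13*L) * M^2 := by
          apply mul_le_mul hcoef hS hSnn (by positivity)
      _ = 13*L*M^2 := by ring
  -- ENNReal helpers
  have hofReal_rpow_two : ∀ y : ℝ, 0 ≤ y →
      (ENNReal.ofReal y) ^ (2:ℝ) = ENNReal.ofReal (y^2) := by
    intro y hy
    rw [ENNReal.ofReal_rpow_of_nonneg hy (by norm_num),
      show (2:ℝ) = ((2:ℕ):ℝ) by norm_num, Real.rpow_natCast]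
  have hNsq : ((N:ℝ)^((s:ℝ)/2))^2 = L := by
    rw [← Real.rpow_natCast ((N:ℝ)^((s:ℝ)/2)) 2, ← Real.rpow_mul (le_of_lt hNpos)]
    rw [show (s:ℝ)/2 * (2:ℕ) = (s:ℝ) by push_cast; ring, Real.rpow_natCast]
  have hfinal : ∀ B R : ℝ, 0 ≤ B → 0 ≤ R → B ≤ R^2 →
      (∫⁻ u in Set.Icc (0:ℝ) L,
        (⨆ a ∈ A, (‖∑ i, a i * eC (θ i * x) * eC (θ i * u)‖₊ : ℝ≥0∞)) ^ (2:ℝ))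
          ≤ ENNReal.ofReal B →
      (∫⁻ u in Set.Icc (0:ℝ) L,
        (⨆ a ∈ A, (‖∑ i, a i * eC (θ i * x) * eC (θ i * u)‖₊ : ℝ≥0∞)) ^ (2:ℝ)) ^ ((1:ℝ)/2)
          ≤ ENNReal.ofReal R := by
    intro B R hB hR hBR hle
    calc _ ≤ (ENNReal.ofReal B)^((1:ℝ)/2) := ENNReal.rpow_le_rpow hle (by norm_num)
      _ = ENNReal.ofReal (B^((1:ℝ)/2)) := ENNReal.ofReal_rpow_of_nonneg hB (by norm_num)
      _ = ENNReal.ofReal (Real.sqrt B) := by rw [Real.sqrt_eq_rpow]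
      _ ≤ ENNReal.ofReal R := by
          apply ENNReal.ofReal_le_ofReal
          calc Real.sqrt B ≤ Real.sqrt (R^2) := Real.sqrt_le_sqrt hBR
            _ = R := Real.sqrt_sq hR
  rcases min_cases (Real.sqrt K) (Real.sqrt A.card) with ⟨hmin, _⟩ | ⟨hmin, _⟩ <;> rw [hmin]
  · -- branch K
    have hptK : ∀ u : ℝ,
        (⨆ a ∈ A, (‖∑ i, a i * eC (θ i * x) * eC (θ i * u)‖₊ : ℝ≥0∞))
          ≤ ENNReal.ofReal (Real.sqrt K * M) := by
      intro u
      apply iSup₂_le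
      intro a ha
      rw [← enorm_eq_nnnorm, ← ofReal_norm]
      apply ENNReal.ofReal_le_ofReal
      have hterm : ∀ i : Fin K, ‖a i * eC (θ i * x) * eC (θ i * u)‖ = ‖a i‖ := by
        intro i
        rw [norm_mul, norm_mul, norm_eC, norm_eC, mul_one, mul_one]
      have hcs : (∑ i, ‖a i‖)^2 ≤ (K:ℝ) * ∑ i, ‖a i‖^2 := by
        have h := Finset.sum_mul_sq_le_sq_mul_sq Finset.univ (fun _ : Fin K => (1:ℝ))
          (fun i => ‖a i‖)
        simpa [Finset.card_univ] using h
      calc ‖∑ i, a i * eC (θ i * x) * eC (θ i * u)‖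
          ≤ ∑ i, ‖a i * eC (θ i * x) * eC (θ i * u)‖ := norm_sum_le _ _
        _ = ∑ i, ‖a i‖ := Finset.sum_congr rfl (fun i _ => hterm i)
        _ ≤ Real.sqrt ((K:ℝ) * ∑ i, ‖a i‖^2) := by
            rw [Real.le_sqrt (Finset.sum_nonneg fun i _ => norm_nonneg _)
              (by positivity)]
            exact hcs
        _ = Real.sqrt K * Real.sqrt (∑ i, ‖a i‖^2) := Real.sqrt_mul (Nat.cast_nonneg K) _
        _ = Real.sqrt K * ‖a‖ := by rw [hnormsum a, Real.sqrt_sq (norm_nonneg a)]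
        _ ≤ Real.sqrt K * M := by
            apply mul_le_mul_of_nonneg_left (hM a ha) (Real.sqrt_nonneg _)
    apply hfinal ((Real.sqrt K * M)^2 * L) (4 * (N:ℝ)^((s:ℝ)/2) * Real.sqrt K * M)
      (by positivity) (by positivity) ?_ ?_
    · -- B ≤ R^2
      have h1 : (Real.sqrt K * M)^2 * L ≤ 16 * (((N:ℝ)^((s:ℝ)/2))^2 * ((Real.sqrt K * M)^2)) := by
        rw [hNsq]
        nlinarith [sq_nonneg (Real.sqrt K * M), hLpos, h16L,
          mul_nonneg (sq_nonneg (Real.sqrt K * M)) (le_of_lt hLpos)]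
      calc (Real.sqrt K * M)^2 * L ≤ _ := h1
        _ = (4 * (N:ℝ)^((s:ℝ)/2) * Real.sqrt K * M)^2 := by ring
    · -- lintegral bound
      calc (∫⁻ u in Set.Icc (0:ℝ) L,
            (⨆ a ∈ A, (‖∑ i, a i * eC (θ i * x) * eC (θ i * u)‖₊ : ℝ≥0∞)) ^ (2:ℝ))
          ≤ ∫⁻ _ in Set.Icc (0:ℝ) L, ENNReal.ofReal ((Real.sqrt K * M)^2) := by
            apply lintegral_mono
            intro u
            calc (⨆ a ∈ A, (‖∑ i, a i * eC (θ i * x) * eC (θ i * u)‖₊ : ℝ≥0∞)) ^ (2:ℝ)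
                ≤ (ENNReal.ofReal (Real.sqrt K * M)) ^ (2:ℝ) :=
                  ENNReal.rpow_le_rpow (hptK u) (by norm_num)
              _ = ENNReal.ofReal ((Real.sqrt K * M)^2) :=
                  hofReal_rpow_two _ (by positivity)
        _ = ENNReal.ofReal ((Real.sqrt K * M)^2) * volume (Set.Icc (0:ℝ) L) := by
            rw [MeasureTheory.lintegral_const, Measure.restrict_apply_univ]
        _ = ENNReal.ofReal ((Real.sqrt K * M)^2) * ENNReal.ofReal L := by
            rw [Real.volume_Icc, sub_zero]
        _ = ENNReal.ofReal ((Real.sqrt K * M)^2 * L) :=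
            (ENNReal.ofReal_mul (by positivity)).symm
  · -- branch |A|
    have h2pow : ∀ y : ℝ≥0∞, y ^ (2:ℝ) = y^(2:ℕ) := by
      intro y
      rw [show (2:ℝ) = ((2:ℕ):ℝ) by norm_num, ENNReal.rpow_natCast]
    have hmeas : ∀ a : EuclideanSpace ℂ (Fin K), Measurable
        (fun u : ℝ => ((‖∑ i, a i * eC (θ i * x) * eC (θ i * u)‖₊ : ℝ≥0∞)) ^ (2:ℕ)) := by
      intro a
      exact (((hpercont a).measurable.nnnorm).coe_nnreal_ennreal).pow_const _
    have hsumpt : ∀ u : ℝ,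
        (⨆ a ∈ A, (‖∑ i, a i * eC (θ i * x) * eC (θ i * u)‖₊ : ℝ≥0∞)) ^ (2:ℝ)
          ≤ ∑ a ∈ A, ((‖∑ i, a i * eC (θ i * x) * eC (θ i * u)‖₊ : ℝ≥0∞)) ^ (2:ℕ) := by
      intro u
      rw [h2pow]
      set g : EuclideanSpace ℂ (Fin K) → ℝ≥0∞ :=
        fun a => (‖∑ i, a i * eC (θ i * x) * eC (θ i * u)‖₊ : ℝ≥0∞) with hg
      obtain ⟨a₀, ha₀, hmax⟩ := Finset.exists_mem_eq_sup A hA g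
      have hGu : (⨆ a ∈ A, g a) = g a₀ := by
        rw [← Finset.sup_eq_iSup]
        exact hmax
      rw [hGu]
      exact Finset.single_le_sum (f := fun a => (g a) ^ (2:ℕ))
        (fun _ _ => zero_le) ha₀
    have hper : ∀ a ∈ A,
        (∫⁻ u in Set.Icc (0:ℝ) L,
          ((‖∑ i, a i * eC (θ i * x) * eC (θ i * u)‖₊ : ℝ≥0∞)) ^ (2:ℕ))
          ≤ ENNReal.ofReal (13*L*M^2) := by
      intro a ha
      have hpt : ∀ u : ℝ, ((‖∑ i, a i * eC (θ i * x) * eC (θ i * u)‖₊ : ℝ≥0∞)) ^ (2:ℕ)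
          = ENNReal.ofReal (‖∑ i, a i * eC (θ i * x) * eC (θ i * u)‖^2) := by
        intro u
        rw [← enorm_eq_nnnorm, ← ofReal_norm, ← h2pow, hofReal_rpow_two _ (norm_nonneg _)]
      simp_rw [hpt]
      have hint : IntegrableOn (fun u : ℝ => ‖∑ i, a i * eC (θ i * x) * eC (θ i * u)‖^2)
          (Set.Icc (0:ℝ) L) := by
        exact (((hpercont a).norm).pow 2).integrableOn_Icc
      have heq := MeasureTheory.ofReal_integral_eq_lintegral_ofReal hint
        (Filter.Eventually.of_forall (fun u => sq_nonneg _))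
      rw [← heq]
      apply ENNReal.ofReal_le_ofReal
      have hIcc : ∫ u in Set.Icc (0:ℝ) L, ‖∑ i, a i * eC (θ i * x) * eC (θ i * u)‖^2
          = ∫ u in (0:ℝ)..L, ‖∑ i, a i * eC (θ i * x) * eC (θ i * u)‖^2 := by
        rw [MeasureTheory.integral_Icc_eq_integral_Ioc,
          intervalIntegral.integral_of_le (le_of_lt hLpos)]
      rw [hIcc]
      exact hIa a ha
    apply hfinal ((A.card : ℝ) * (13*L*M^2)) (4 * (N:ℝ)^((s:ℝ)/2) * Real.sqrt A.card * M)
      (by positivity) (by positivity) ?_ ?_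
    · have hcard : (0:ℝ) ≤ (A.card:ℝ) := Nat.cast_nonneg _
      have h1 : (A.card:ℝ) * (13*L*M^2) ≤ 16 * (((N:ℝ)^((s:ℝ)/2))^2 * ((Real.sqrt A.card)^2 * M^2)) := by
        rw [hNsq, Real.sq_sqrt hcard]
        nlinarith [mul_nonneg (mul_nonneg hcard (le_of_lt hLpos)) (sq_nonneg M)]
      calc (A.card:ℝ) * (13*L*M^2) ≤ _ := h1
        _ = (4 * (N:ℝ)^((s:ℝ)/2) * Real.sqrt A.card * M)^2 := by ring
    · calc (∫⁻ u in Set.Icc (0:ℝ) L,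
            (⨆ a ∈ A, (‖∑ i, a i * eC (θ i * x) * eC (θ i * u)‖₊ : ℝ≥0∞)) ^ (2:ℝ))
          ≤ ∫⁻ u in Set.Icc (0:ℝ) L,
            ∑ a ∈ A, ((‖∑ i, a i * eC (θ i * x) * eC (θ i * u)‖₊ : ℝ≥0∞)) ^ (2:ℕ) :=
            lintegral_mono hsumpt
        _ = ∑ a ∈ A, ∫⁻ u in Set.Icc (0:ℝ) L,
            ((‖∑ i, a i * eC (θ i * x) * eC (θ i * u)‖₊ : ℝ≥0∞)) ^ (2:ℕ) :=
            lintegral_finset_sum _ (fun a _ => hmeas a)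
        _ ≤ ∑ _ ∈ A, ENNReal.ofReal (13*L*M^2) := Finset.sum_le_sum hper
        _ = A.card • ENNReal.ofReal (13*L*M^2) := by rw [Finset.sum_const]
        _ = (A.card : ℝ≥0∞) * ENNReal.ofReal (13*L*M^2) := by
            rw [nsmul_eq_mul]
        _ = ENNReal.ofReal ((A.card:ℝ) * (13*L*M^2)) := by
            rw [ENNReal.ofReal_mul (Nat.cast_nonneg _), ENNReal.ofReal_natCast]

/-- The maximal exponential-sum lemma on `ℓ²_K`: for `s`-separated frequencies and a
finite set `A ⊆ ℂ^K`,
`‖sup_{a∈A} |Σ_i a_i e(θ_i x) e(θ_i u)|‖_{L²_u[0,cN^s]}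
  ≲ N^{s/2} min{K^{1/2}, |A|^{1/2}} sup_{a∈A} ‖a‖_{ℓ²_K}`. -/
theorem maximal_exponential_sum_lemma :
    ∃ c C : ℝ, 0 < c ∧ 0 < C ∧
    ∀ N : ℕ, (∃ k, N = 2^k) → 4 ≤ N → ∀ s : ℕ, ∀ K : ℕ,
    ∀ θ : Fin K → ℝ, (∀ i j, i ≠ j → (2:ℝ) ^ (-(2*(s:ℤ)) - 2) < |θ i - θ j|) →
    ∀ A : Finset (EuclideanSpace ℂ (Fin K)), ∀ x : ℝ,
    (∫⁻ u in Set.Icc (0:ℝ) (c * (N:ℝ)^(s:ℕ)),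
        (⨆ a ∈ A, (‖∑ i, a i * eC (θ i * x) * eC (θ i * u)‖₊ : ℝ≥0∞)) ^ (2:ℝ))
      ^ ((1:ℝ)/2)
      ≤ ENNReal.ofReal (C * (N:ℝ) ^ ((s:ℝ)/2) *
          min (Real.sqrt K) (Real.sqrt A.card) * (⨆ a ∈ A, ‖a‖)) :=
  ⟨1, 4, one_pos, by norm_num, main_aux⟩
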